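/- With p(x) = (1/M) Σ_{m=0}^{M-1} (m!/(m+ν)!) [L_m^ν(x)]² x^ν e^{-x} on (0,∞), ν = N−M ≥ 0, the second moment ∫₀^∞ x² p(x) dx equals N(N+M). -/

import Mathlib

open MeasureTheory Real

/-- Associated Laguerre polynomial `L_n^ν(x) = ∑_{k=0}^n C(n+ν, n-k) (-x)^k / k!`. -/
noncomputable def assocLaguerre (n ν : ℕ) (x : ℝ) : ℝ :=
  ∑ k ∈ Finset.range (n + 1), ((n + ν).choose (n - k) : ℝ) * (-x) ^ k / (Nat.factorial k)

/-- Marginal density of an unordered eigenvalue of a complex Wishart matrix. -/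
noncomputable def eigenDensity (M ν : ℕ) (x : ℝ) : ℝ :=
  (1 / M) * ∑ m ∈ Finset.range M,
    ((Nat.factorial m : ℝ) / (Nat.factorial (m + ν))) *
      (assocLaguerre m ν x) ^ 2 * x ^ ν * Real.exp (-x)

lemma integrable_pow_exp (n : ℕ) :
    IntegrableOn (fun x : ℝ => x ^ n * Real.exp (-x)) (Set.Ioi 0) := by
  have h := Real.GammaIntegral_convergent (show (0:ℝ) < n + 1 by positivity)
  refine h.congr_fun (fun x hx => ?_) measurableSet_Ioi
  beta_reduce
  rw [add_sub_cancel_right, Real.rpow_natCast, mul_comm]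

lemma integral_pow_exp (n : ℕ) :
    ∫ x in Set.Ioi (0:ℝ), x ^ n * Real.exp (-x) = n.factorial := by
  have h := Real.Gamma_eq_integral (show (0:ℝ) < n + 1 by positivity)
  have h2 : Real.Gamma ((n:ℝ) + 1) = n.factorial := by
    rw [← Real.Gamma_nat_eq_factorial]
  rw [h2] at h
  rw [h]
  congr 1
  ext x
  rw [add_sub_cancel_right, Real.rpow_natCast, mul_comm]

lemma vand (b : ℕ) : ∀ a n : ℕ, a ≤ b + n →
    ∑ k ∈ Finset.range (n+1), (-1:ℤ)^k * (a.choose (n-k)) * ((b+k).choose k)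
      = (-1)^n * ((b+n-a).choose n) := by
  intro a
  induction a with
  | zero =>
    intro n _
    rw [Finset.sum_eq_single n]
    · simp
    · intro k hk hkn
      have hk' : k < n := lt_of_le_of_ne (Finset.mem_range_succ_iff.mp hk) hkn
      have hz : Nat.choose 0 (n-k) = 0 := by
        rw [show n-k = (n-k-1)+1 by omega]; exact Nat.choose_zero_succ _
      rw [hz]; push_cast; ring
    · intro h; exact absurd (Finset.self_mem_range_succ n) h
  | succ a IH =>
    intro n han
    match n with
    | 0 => simp
    | Nat.succ n' =>
      simp only [Nat.succ_eq_add_one] at *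
      have h1 : a ≤ b + (n'+1) := le_trans (Nat.le_succ a) han
      have h2 : a ≤ b + n' := by omega
      have split : ∑ k ∈ Finset.range (n'+1+1), (-1:ℤ)^k * ((a+1).choose (n'+1-k)) * ((b+k).choose k)
          = (∑ k ∈ Finset.range (n'+1+1), (-1:ℤ)^k * (a.choose (n'+1-k)) * ((b+k).choose k))
            + (∑ k ∈ Finset.range (n'+1), (-1:ℤ)^k * (a.choose (n'-k)) * ((b+k).choose k)) := by
        rw [Finset.sum_range_succ, Finset.sum_range_succ
          (fun k => (-1:ℤ)^k * (a.choose (n'+1-k)) * ((b+k).choose k))]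
        have key : ∑ k ∈ Finset.range (n'+1), (-1:ℤ)^k * ((a+1).choose (n'+1-k)) * ((b+k).choose k)
            = ∑ k ∈ Finset.range (n'+1), ((-1:ℤ)^k * (a.choose (n'+1-k)) * ((b+k).choose k)
              + (-1:ℤ)^k * (a.choose (n'-k)) * ((b+k).choose k)) := by
          refine Finset.sum_congr rfl (fun k hk => ?_)
          have hk' : k ≤ n' := Finset.mem_range_succ_iff.mp hk
          rw [show n'+1-k = (n'-k)+1 by omega, Nat.choose_succ_succ]
          push_cast; ring
        rw [key, Finset.sum_add_distrib]
        simp only [Nat.sub_self, Nat.choose_zero_right]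
        push_cast; ring
      rw [split, IH (n'+1) h1, IH n' h2,
        show b + (n'+1) - a = (b + (n'+1) - (a+1)) + 1 by omega,
        show b + n' - a = b + (n'+1) - (a+1) by omega, Nat.choose_succ_succ]
      push_cast; ring

lemma lag_moment (m ν s : ℕ) :
    ∑ k ∈ Finset.range (m+1),
      ((m+ν).choose (m-k) : ℝ) * (-1)^k * ((ν+s+k).factorial / (k.factorial))
      = (-1)^m * (ν+s).factorial * (s.choose m) := by
  have hv := vand (ν+s) (m+ν) m (by omega)
  rw [show ν+s+m-(m+ν) = s by omega] at hv
  have hcast : ∀ k : ℕ, ((ν+s+k).factorial : ℝ) / k.factorial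
      = ((ν+s+k).choose k) * (ν+s).factorial := by
    intro k
    have h := Nat.add_choose_mul_factorial_mul_factorial (ν+s) k
    have hk : (k.factorial : ℝ) ≠ 0 := by positivity
    field_simp
    push_cast [← h]
    ring
  calc ∑ k ∈ Finset.range (m+1),
        ((m+ν).choose (m-k) : ℝ) * (-1)^k * ((ν+s+k).factorial / (k.factorial))
      = ∑ k ∈ Finset.range (m+1),
        (((-1:ℤ)^k * ((m+ν).choose (m-k)) * ((ν+s+k).choose k) : ℤ) : ℝ) * (ν+s).factorial := by
        refine Finset.sum_congr rfl (fun k _ => ?_)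
        rw [hcast k]; push_cast; ring
    _ = ((∑ k ∈ Finset.range (m+1),
        (-1:ℤ)^k * ((m+ν).choose (m-k)) * ((ν+s+k).choose k) : ℤ) : ℝ) * (ν+s).factorial := by
        rw [← Finset.sum_mul]; push_cast; ring
    _ = (-1)^m * (ν+s).factorial * (s.choose m) := by rw [hv]; push_cast; ring

lemma double_sum (m ν : ℕ) :
    ∑ j ∈ Finset.range (m+1), ∑ k ∈ Finset.range (m+1),
      ((m+ν).choose (m-j) : ℝ) * ((m+ν).choose (m-k)) * (-1)^(j+k)
        / (j.factorial * k.factorial) * (ν+j+k+2).factorial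
    = ((m+ν).factorial / m.factorial) * (6*m^2 + 6*m*(ν+1) + (ν+1)*(ν+2)) := by
  have inner : ∀ j : ℕ, ∑ k ∈ Finset.range (m+1),
      ((m+ν).choose (m-j) : ℝ) * ((m+ν).choose (m-k)) * (-1)^(j+k)
        / (j.factorial * k.factorial) * (ν+j+k+2).factorial
      = ((m+ν).choose (m-j) : ℝ) * (-1)^j / j.factorial
        * ((-1)^m * (ν+(j+2)).factorial * ((j+2).choose m)) := by
    intro j
    rw [← lag_moment m ν (j+2), Finset.mul_sum]
    refine Finset.sum_congr rfl (fun k _ => ?_)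
    rw [show ν+j+k+2 = ν+(j+2)+k by omega]
    ring
  simp only [inner]
  have g1 : ((ν+1).factorial : ℝ) = (ν+1) * ν.factorial := by
    rw [Nat.factorial_succ]; push_cast; ring
  have g2 : ((ν+2).factorial : ℝ) = (ν+2) * (ν+1) * ν.factorial := by
    rw [show ν+2 = (ν+1)+1 by omega, Nat.factorial_succ]; push_cast; rw [g1]; ring
  have g3 : ((ν+3).factorial : ℝ) = (ν+3) * (ν+2) * (ν+1) * ν.factorial := by
    rw [show ν+3 = (ν+2)+1 by omega, Nat.factorial_succ]; push_cast; rw [g2]; ring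
  match m with
  | 0 =>
    simp only [Finset.sum_range_succ, Finset.sum_range_zero]
    norm_num
    rw [g2]
    ring
  | 1 =>
    simp only [Finset.sum_range_succ, Finset.sum_range_zero]
    norm_num [Nat.choose_one_right]
    rw [show 1+ν = ν+1 by omega, g1, g2, g3]
    ring
  | (c+2) =>
    rw [Finset.sum_range_succ, Finset.sum_range_succ, Finset.sum_range_succ,
      Finset.sum_eq_zero (fun j hj => by
        have : j + 2 < c + 2 := by
          have := Finset.mem_range.mp hj; omega
        rw [Nat.choose_eq_zero_of_lt this]
        simp)]
    rw [show (c+2) - c = 2 by omega, show (c+2) - (c+1) = 1 by omega,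
      show (c+2) - (c+2) = 0 by omega]
    have hc1 : (c+3).choose (c+2) = c+3 := by
      rw [show c+2 = (c+3)-1 by omega, Nat.choose_symm (by omega), Nat.choose_one_right]
    have hc2 : (c+4).choose (c+2) = (c+4).choose 2 := by
      rw [show c+2 = (c+4)-2 by omega, Nat.choose_symm (by omega)]
    rw [hc1, hc2, Nat.choose_self, Nat.choose_zero_right, Nat.choose_one_right]
    have f1 : ((ν+(c+1+2)).factorial : ℝ) = (ν+c+3) * (ν+(c+2)).factorial := by
      rw [show ν+(c+1+2) = (ν+(c+2))+1 by omega, Nat.factorial_succ]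
      push_cast; ring
    have f2 : ((ν+(c+2+2)).factorial : ℝ) = (ν+c+4) * (ν+c+3) * (ν+(c+2)).factorial := by
      rw [show ν+(c+2+2) = ((ν+(c+2))+1)+1 by omega, Nat.factorial_succ, Nat.factorial_succ]
      push_cast; ring
    have f3 : ((c+2+ν).factorial : ℝ) = (ν+(c+2)).factorial := by
      rw [show c+2+ν = ν+(c+2) by omega]
    have f4 : ((c+1).factorial : ℝ) = (c+1) * c.factorial := by
      rw [Nat.factorial_succ]; push_cast; ring
    have f5 : ((c+2).factorial : ℝ) = (c+2) * (c+1) * c.factorial := by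
      rw [Nat.factorial_succ, Nat.factorial_succ]; push_cast; ring
    rw [f1, f2, f3, f4, f5, Nat.cast_choose_two, Nat.cast_choose_two]
    have hb : (c.factorial : ℝ) ≠ 0 := by positivity
    have hpow : ((-1:ℝ))^(c*2) = 1 := by
      rw [mul_comm, pow_mul, neg_one_sq, one_pow]
    push_cast
    field_simp
    ring_nf
    simp only [hpow, mul_one]

lemma sumE (v : ℝ) : ∀ M : ℕ,
    ∑ m ∈ Finset.range M, (6*(m:ℝ)^2 + 6*m*(v+1) + (v+1)*(v+2))
      = 2*(M:ℝ)^3 - 3*M^2 + M + 3*(v+1)*((M:ℝ)^2 - M) + M*(v+1)*(v+2) := by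
  intro M
  induction M with
  | zero => simp
  | succ n ih =>
    rw [Finset.sum_range_succ, ih]
    push_cast
    ring

theorem eigen_second_moment (M N : ℕ) (hM : 1 ≤ M) (hMN : M ≤ N) :
    ∫ x in Set.Ioi (0 : ℝ), x ^ 2 * eigenDensity M (N - M) x = N * (N + M) := by
  set ν : ℕ := N - M with hν
  -- pointwise expansion
  have hfun : ∀ x : ℝ, x ^ 2 * eigenDensity M ν x
      = ∑ m ∈ Finset.range M, ∑ j ∈ Finset.range (m+1), ∑ k ∈ Finset.range (m+1),
        ((1/(M:ℝ)) * (m.factorial / (m+ν).factorial) * ((m+ν).choose (m-j))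
          * ((m+ν).choose (m-k)) * (-1)^(j+k) / (j.factorial * k.factorial))
        * (x ^ (ν+j+k+2) * Real.exp (-x)) := by
    intro x
    simp only [eigenDensity, assocLaguerre, pow_two, Finset.sum_mul_sum,
      Finset.mul_sum, Finset.sum_mul]
    refine Finset.sum_congr rfl (fun m _ => ?_)
    refine Finset.sum_congr rfl (fun j _ => ?_)
    refine Finset.sum_congr rfl (fun k _ => ?_)
    rw [neg_pow x j, neg_pow x k]
    simp only [pow_add]
    ring
  have hint : ∀ (c : ℝ) (p : ℕ),
      Integrable (fun x : ℝ => c * (x ^ p * Real.exp (-x)))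
        (volume.restrict (Set.Ioi 0)) := fun c p => (integrable_pow_exp p).const_mul c
  simp only [hfun]
  rw [integral_finset_sum _ (fun m _ => integrable_finset_sum _
    (fun j _ => integrable_finset_sum _ (fun k _ => hint _ _)))]
  have hswap : ∀ m ∈ Finset.range M,
      (∫ x in Set.Ioi (0:ℝ), ∑ j ∈ Finset.range (m+1), ∑ k ∈ Finset.range (m+1),
        ((1/(M:ℝ)) * (m.factorial / (m+ν).factorial) * ((m+ν).choose (m-j))
          * ((m+ν).choose (m-k)) * (-1)^(j+k) / (j.factorial * k.factorial))
        * (x ^ (ν+j+k+2) * Real.exp (-x)))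
      = (1/(M:ℝ)) * (6*(m:ℝ)^2 + 6*m*((ν:ℝ)+1) + ((ν:ℝ)+1)*((ν:ℝ)+2)) := by
    intro m _
    rw [integral_finset_sum _ (fun j _ => integrable_finset_sum _ (fun k _ => hint _ _))]
    have hjint : ∀ j ∈ Finset.range (m+1),
        (∫ x in Set.Ioi (0:ℝ), ∑ k ∈ Finset.range (m+1),
        ((1/(M:ℝ)) * (m.factorial / (m+ν).factorial) * ((m+ν).choose (m-j))
          * ((m+ν).choose (m-k)) * (-1)^(j+k) / (j.factorial * k.factorial))
        * (x ^ (ν+j+k+2) * Real.exp (-x)))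
        = ∑ k ∈ Finset.range (m+1),
        ((1/(M:ℝ)) * (m.factorial / (m+ν).factorial) * ((m+ν).choose (m-j))
          * ((m+ν).choose (m-k)) * (-1)^(j+k) / (j.factorial * k.factorial))
        * ((ν+j+k+2).factorial) := by
      intro j _
      rw [integral_finset_sum _ (fun k _ => hint _ _)]
      refine Finset.sum_congr rfl (fun k _ => ?_)
      rw [integral_const_mul, integral_pow_exp]
    rw [Finset.sum_congr rfl hjint]
    have : ∑ j ∈ Finset.range (m+1), ∑ k ∈ Finset.range (m+1),
        ((1/(M:ℝ)) * (m.factorial / (m+ν).factorial) * ((m+ν).choose (m-j))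
          * ((m+ν).choose (m-k)) * (-1)^(j+k) / (j.factorial * k.factorial))
        * ((ν+j+k+2).factorial)
        = (1/(M:ℝ)) * ((m.factorial : ℝ) / (m+ν).factorial)
          * ∑ j ∈ Finset.range (m+1), ∑ k ∈ Finset.range (m+1),
            ((m+ν).choose (m-j) : ℝ) * ((m+ν).choose (m-k)) * (-1)^(j+k)
              / (j.factorial * k.factorial) * (ν+j+k+2).factorial := by
      rw [Finset.mul_sum]
      refine Finset.sum_congr rfl (fun j _ => ?_)
      rw [Finset.mul_sum]
      refine Finset.sum_congr rfl (fun k _ => ?_)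
      ring
    rw [this, double_sum m ν]
    have hf1 : ((m.factorial : ℝ)) ≠ 0 := by positivity
    have hf2 : (((m+ν).factorial : ℝ)) ≠ 0 := by positivity
    field_simp
  rw [Finset.sum_congr rfl hswap, ← Finset.mul_sum, sumE ((ν:ℝ)) M]
  have hM0 : (M:ℝ) ≠ 0 := by positivity
  have hcast : (ν:ℝ) = (N:ℝ) - M := by
    rw [hν]; push_cast [Nat.cast_sub hMN]; ring
  rw [hcast]
  field_simp
  ring
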